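/- (Magnus-type formula) Let A be a Banach algebra over ℝ (or ℂ), let d : A → A be a continuous linear derivation (d(ab) = d(a)b + a·d(b)), and let l ∈ A. Let exp denote the exponential in A and ad_l(a) := l·a − a·l. Then exp(−l)·d(exp(l)) = ∑_{i=0}^{∞} (1/(i+1)!)·(−ad_l)^i(d(l)), the series on the right converging absolutely; equivalently, the logarithmic derivative of exp(l) with respect to d equals ((exp(−ad_l) − 1)/(−ad_l)) applied to d(l). -/

import Mathlib

open NormedSpace MeasureTheory intervalIntegral

section B


variable {A : Type} [NormedRing A] [NormedAlgebra ℝ A] [CompleteSpace A]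

noncomputable instance st13_ratAlg {B : Type} [NormedRing B] [NormedAlgebra ℝ B] :
    NormedAlgebra ℚ B :=
  NormedAlgebra.restrictScalars ℚ ℝ B

lemma st13_pow_apply_norm_le (T : A →L[ℝ] A) (x : A) : ∀ i : ℕ, ‖(T ^ i) x‖ ≤ ‖T‖ ^ i * ‖x‖
  | 0 => by simp
  | (i + 1) => by
      rw [pow_succ']
      calc ‖(T * T ^ i) x‖ = ‖T ((T ^ i) x)‖ := by rw [ContinuousLinearMap.mul_apply]
        _ ≤ ‖T‖ * ‖(T ^ i) x‖ := T.le_opNorm _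
        _ ≤ ‖T‖ * (‖T‖ ^ i * ‖x‖) :=
            mul_le_mul_of_nonneg_left (st13_pow_apply_norm_le T x i) (norm_nonneg _)
        _ = ‖T‖ ^ (i + 1) * ‖x‖ := by ring

lemma st13_summable (T : A →L[ℝ] A) (x : A) :
    Summable fun i : ℕ => ‖(((i + 1).factorial : ℝ)⁻¹ • (T ^ i) x : A)‖ := by
  refine Summable.of_nonneg_of_le (fun i => norm_nonneg _) (fun i => ?_)
    ((Real.summable_pow_div_factorial ‖T‖).mul_right ‖x‖)
  have h1 : ‖(((i + 1).factorial : ℝ)⁻¹ • (T ^ i) x : A)‖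
      = ((i + 1).factorial : ℝ)⁻¹ * ‖(T ^ i) x‖ := by
    rw [norm_smul, Real.norm_eq_abs, abs_of_nonneg (by positivity)]
  have h2 : ((i + 1).factorial : ℝ)⁻¹ ≤ ((i).factorial : ℝ)⁻¹ := by
    apply inv_anti₀ (by positivity)
    exact_mod_cast Nat.factorial_le (Nat.le_succ i)
  rw [h1]
  calc ((i + 1).factorial : ℝ)⁻¹ * ‖(T ^ i) x‖
      ≤ ((i).factorial : ℝ)⁻¹ * (‖T‖ ^ i * ‖x‖) := by
        apply mul_le_mul h2 (st13_pow_apply_norm_le T x i) (norm_nonneg _) (by positivity)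
    _ = ‖T‖ ^ i / (i).factorial * ‖x‖ := by ring


variable {A : Type} [NormedRing A] [NormedAlgebra ℝ A] [CompleteSpace A]

lemma st13_d_one (d : A →L[ℝ] A) (hd : ∀ a b : A, d (a * b) = d a * b + a * d b) : d 1 = 0 := by
  have h := hd 1 1
  simp only [mul_one, one_mul] at h
  exact (left_eq_add.mp h)

lemma st13_exp_mul_exp_neg (l : A) (t : ℝ) :
    NormedSpace.exp (t • (-l)) * NormedSpace.exp (t • l) = 1 := by
  rw [← NormedSpace.exp_add_of_commute (((Commute.refl l).neg_left.smul_left t).smul_right t)]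
  rw [smul_neg, neg_add_cancel, NormedSpace.exp_zero]

lemma st13_hF (d : A →L[ℝ] A) (hd : ∀ a b : A, d (a * b) = d a * b + a * d b) (l : A) (t : ℝ) :
    HasDerivAt (fun t : ℝ => NormedSpace.exp (t • (-l)) * d (NormedSpace.exp (t • l)))
      (d l + ((NormedSpace.exp (t • (-l)) * d (NormedSpace.exp (t • l))) * l
        - l * (NormedSpace.exp (t • (-l)) * d (NormedSpace.exp (t • l))))) t := by
  have h1 := hasDerivAt_exp_smul_const (𝕂 := ℝ) (-l) t
  have h2 := hasDerivAt_exp_smul_const (𝕂 := ℝ) l t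
  have h3 : HasDerivAt (fun u : ℝ => d (NormedSpace.exp (u • l)))
      (d (NormedSpace.exp (t • l) * l)) t := d.hasFDerivAt.comp_hasDerivAt t h2
  have h4 := h1.mul h3
  convert h4 using 1
  · rfl
  have hcomm : NormedSpace.exp (t • (-l)) * (-l) = (-l) * NormedSpace.exp (t • (-l)) :=
    (((Commute.refl (-l)).smul_left t).exp_left).eq
  rw [hd (NormedSpace.exp (t • l)) l, mul_add,
    show NormedSpace.exp (t • (-l)) * (NormedSpace.exp (t • l) * d l) = d l by
      rw [← mul_assoc, st13_exp_mul_exp_neg l t, one_mul],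
    hcomm]
  noncomm_ring

end B

section C
variable {A : Type} [NormedRing A] [NormedAlgebra ℝ A] [CompleteSpace A]

lemma st13_hH (T : A →L[ℝ] A) (F : ℝ → A) (y : A)
    (hF : ∀ t : ℝ, HasDerivAt F (y + T (F t)) t) (t : ℝ) :
    HasDerivAt (fun t : ℝ => (NormedSpace.exp (t • (-T))) (F t))
      ((NormedSpace.exp (t • (-T))) y) t := by
  have h1 := hasDerivAt_exp_smul_const (𝕂 := ℝ) (-T) t
  have h2 := h1.clm_apply (hF t)
  convert h2 using 1
  · rfl
  rw [ContinuousLinearMap.mul_apply, ContinuousLinearMap.neg_apply, map_neg, map_add]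
  abel

lemma st13_smul_pow_apply (u : ℝ) (T : A →L[ℝ] A) (y : A) :
    ∀ i : ℕ, ((u • T) ^ i) y = u ^ i • (T ^ i) y
  | 0 => by simp
  | (i + 1) => by
      rw [pow_succ', ContinuousLinearMap.mul_apply, st13_smul_pow_apply u T y i,
        ContinuousLinearMap.smul_apply, _root_.map_smul]
      rw [smul_smul, pow_succ' T, ContinuousLinearMap.mul_apply, ← pow_succ']

lemma st13_exp_apply (T : A →L[ℝ] A) (y : A) (u : ℝ) :
    (NormedSpace.exp (u • T)) y = ∑' i : ℕ, (u ^ i * ((i).factorial : ℝ)⁻¹) • (T ^ i) y := by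
  have hs := NormedSpace.expSeries_summable' (𝕂 := ℝ) (u • T)
  have h0 : (NormedSpace.exp (u • T)) y
      = (ContinuousLinearMap.apply ℝ A y) (∑' n : ℕ, ((n).factorial : ℝ)⁻¹ • (u • T) ^ n) := by
    rw [NormedSpace.exp_eq_tsum ℝ]
    rfl
  rw [h0, (ContinuousLinearMap.apply ℝ A y).map_tsum hs]
  refine tsum_congr fun i => ?_
  rw [_root_.map_smul]
  show ((i).factorial : ℝ)⁻¹ • ((u • T) ^ i) y = _
  rw [st13_smul_pow_apply, smul_smul, mul_comm]

end C

section D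
variable {A : Type} [NormedRing A] [NormedAlgebra ℝ A] [CompleteSpace A]

instance st13_tower : IsScalarTower ℝ (A →L[ℝ] A) (A →L[ℝ] A) :=
  ⟨fun r f g => by
    ext x
    simp [smul_eq_mul, ContinuousLinearMap.mul_apply]⟩

instance st13_comm : SMulCommClass ℝ (A →L[ℝ] A) (A →L[ℝ] A) :=
  ⟨fun r f g => by
    ext x
    simp [smul_eq_mul, ContinuousLinearMap.mul_apply, _root_.map_smul]⟩

set_option synthInstance.maxHeartbeats 4000000 in
lemma st13_main (T : A →L[ℝ] A) (F : ℝ → A) (y : A)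
    (hF : ∀ t : ℝ, HasDerivAt F (y + T (F t)) t) (hF0 : F 0 = 0) :
    F 1 = ∫ u in (0:ℝ)..1, (NormedSpace.exp (u • T)) y := by
  have hcont : Continuous fun s : ℝ => (NormedSpace.exp (s • (-T))) y :=
    (NormedSpace.exp_continuous.comp (continuous_id.smul continuous_const)).clm_apply
      continuous_const
  have key : ∫ s in (0:ℝ)..1, (NormedSpace.exp (s • (-T))) y
      = (NormedSpace.exp ((1:ℝ) • (-T))) (F 1) - (NormedSpace.exp ((0:ℝ) • (-T))) (F 0) :=
    integral_eq_sub_of_hasDerivAt (fun t _ => st13_hH T F y hF t)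
      (hcont.intervalIntegrable 0 1)
  rw [hF0, map_zero, sub_zero, one_smul] at key
  have hinv : NormedSpace.exp T * NormedSpace.exp (-T) = 1 := by
    rw [← NormedSpace.exp_add_of_commute (Commute.refl T).neg_right, add_neg_cancel,
      NormedSpace.exp_zero]
  have hF1 : F 1 = (NormedSpace.exp T) ((NormedSpace.exp (-T)) (F 1)) := by
    rw [← ContinuousLinearMap.mul_apply, hinv, ContinuousLinearMap.one_apply]
  rw [hF1, ← key, ← ContinuousLinearMap.intervalIntegral_comp_comm _
    (hcont.intervalIntegrable 0 1)]
  have hptw : ∀ s : ℝ, (NormedSpace.exp T) ((NormedSpace.exp (s • (-T))) y)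
      = (NormedSpace.exp ((1 - s) • T)) y := by
    intro s
    rw [← ContinuousLinearMap.mul_apply,
      ← NormedSpace.exp_add_of_commute (((Commute.refl T).neg_right).smul_right s)]
    congr 2
    module
  simp_rw [hptw]
  have h := intervalIntegral.integral_comp_sub_left (a := (0:ℝ)) (b := 1)
    (fun u : ℝ => (NormedSpace.exp (u • T)) y) 1
  simpa using h

end D

section E
variable {A : Type} [NormedRing A] [NormedAlgebra ℝ A] [CompleteSpace A]

lemma st13_integral (T : A →L[ℝ] A) (y : A) :
    ∫ u in (0:ℝ)..1, (NormedSpace.exp (u • T)) y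
      = ∑' i : ℕ, ((i + 1).factorial : ℝ)⁻¹ • (T ^ i) y := by
  rw [integral_of_le (zero_le_one)]
  simp_rw [st13_exp_apply T y]
  set F : ℕ → ℝ → A := fun i u => (u ^ i * ((i).factorial : ℝ)⁻¹) • (T ^ i) y with hFdef
  have hFcont : ∀ i, Continuous (F i) :=
    fun i => ((continuous_pow i).mul continuous_const).smul continuous_const
  have hFint : ∀ i, Integrable (F i) (volume.restrict (Set.Ioc (0:ℝ) 1)) :=
    fun i => (hFcont i).integrableOn_Ioc
  have hbound : ∀ i : ℕ, ∀ u ∈ Set.Ioc (0:ℝ) 1,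
      ‖F i u‖ ≤ ((i).factorial : ℝ)⁻¹ * ‖(T ^ i) y‖ := by
    intro i u hu
    rw [hFdef]
    simp only [norm_smul, Real.norm_eq_abs, abs_mul, abs_pow]
    have h1 : |u| ^ i ≤ 1 := pow_le_one₀ (abs_nonneg u) (abs_le.mpr ⟨by linarith [hu.1], hu.2⟩)
    have h2 : |(((i).factorial : ℝ))⁻¹| = ((i).factorial : ℝ)⁻¹ := abs_of_nonneg (by positivity)
    rw [h2]
    calc |u| ^ i * ((i).factorial : ℝ)⁻¹ * ‖(T ^ i) y‖
        ≤ 1 * ((i).factorial : ℝ)⁻¹ * ‖(T ^ i) y‖ := by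
          apply mul_le_mul_of_nonneg_right (mul_le_mul_of_nonneg_right h1 (by positivity))
            (norm_nonneg _)
      _ = ((i).factorial : ℝ)⁻¹ * ‖(T ^ i) y‖ := by ring
  have hc : Summable fun i : ℕ => ((i).factorial : ℝ)⁻¹ * ‖(T ^ i) y‖ := by
    refine Summable.of_nonneg_of_le (fun i => by positivity) (fun i => ?_)
      ((Real.summable_pow_div_factorial ‖T‖).mul_right ‖y‖)
    calc ((i).factorial : ℝ)⁻¹ * ‖(T ^ i) y‖
        ≤ ((i).factorial : ℝ)⁻¹ * (‖T‖ ^ i * ‖y‖) := by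
          apply mul_le_mul_of_nonneg_left (st13_pow_apply_norm_le T y i) (by positivity)
      _ = ‖T‖ ^ i / (i).factorial * ‖y‖ := by ring
  have hFsum : Summable fun i => ∫ u, ‖F i u‖ ∂(volume.restrict (Set.Ioc (0:ℝ) 1)) := by
    refine Summable.of_nonneg_of_le (fun i => integral_nonneg fun u => norm_nonneg _)
      (fun i => ?_) hc
    calc ∫ u, ‖F i u‖ ∂(volume.restrict (Set.Ioc (0:ℝ) 1))
        ≤ ∫ _u, ((i).factorial : ℝ)⁻¹ * ‖(T ^ i) y‖
              ∂(volume.restrict (Set.Ioc (0:ℝ) 1)) := by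
            apply setIntegral_mono_on ((hFcont i).norm).integrableOn_Ioc
              (integrableOn_const (by simp))
              measurableSet_Ioc (hbound i)
        _ = ((i).factorial : ℝ)⁻¹ * ‖(T ^ i) y‖ := by
            rw [setIntegral_const]
            simp
  rw [← integral_tsum_of_summable_integral_norm hFint hFsum]
  refine tsum_congr fun i => ?_
  rw [hFdef]
  rw [← integral_of_le (zero_le_one)]
  rw [intervalIntegral.integral_smul_const, intervalIntegral.integral_mul_const, integral_pow]
  congr 1
  rw [Nat.factorial_succ]
  push_cast
  have h3 : ((i:ℝ) + 1) ≠ 0 := by positivity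
  field_simp
  simp

end E

/-- Magnus-type formula: Let `A` be a real Banach algebra, `d : A → A` a
continuous linear derivation and `l ∈ A`.  Then
`exp(−l)·d(exp(l)) = ∑_{i=0}^{∞} (1/(i+1)!)·(−ad_l)^i(d(l))`, the series on the right
converging absolutely; i.e. the logarithmic derivative of `exp(l)` with respect to `d`
equals `((exp(−ad_l) − 1)/(−ad_l))(d(l))`. -/
theorem statement13 (A : Type) [NormedRing A] [NormedAlgebra ℝ A] [CompleteSpace A]
    (d : A →L[ℝ] A) (hd : ∀ a b : A, d (a * b) = d a * b + a * d b) (l : A) :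
    (Summable fun i : ℕ =>
      ‖(((i + 1).factorial : ℝ)⁻¹ • (fun a => -(l * a - a * l))^[i] (d l) : A)‖) ∧
    NormedSpace.exp (-l) * d (NormedSpace.exp l) =
      ∑' i : ℕ, ((i + 1).factorial : ℝ)⁻¹ • (fun a => -(l * a - a * l))^[i] (d l) := by
  set T : A →L[ℝ] A :=
    (ContinuousLinearMap.mul ℝ A).flip l - ContinuousLinearMap.mul ℝ A l with hT
  have hTfun : (fun a : A => -(l * a - a * l)) = ⇑T := by
    funext a
    simp [hT, neg_sub]
  have hiter : ∀ i : ℕ, (fun a : A => -(l * a - a * l))^[i] (d l) = (T ^ i) (d l) := by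
    intro i
    rw [hTfun, ← FunLike.coe_pow_eq_iterate]
  constructor
  · simp only [hiter]
    exact st13_summable T (d l)
  · simp only [hiter]
    set F : ℝ → A :=
      fun t => NormedSpace.exp (t • (-l)) * d (NormedSpace.exp (t • l)) with hFdef
    have hF : ∀ t : ℝ, HasDerivAt F (d l + T (F t)) t := by
      intro t
      have h := st13_hF d hd l t
      have hTapp : T (F t) = F t * l - l * F t := by simp [hT]
      rw [hTapp]
      exact h
    have hF0 : F 0 = 0 := by
      simp [hFdef, zero_smul, NormedSpace.exp_zero, st13_d_one d hd]
    have hgoal : NormedSpace.exp (-l) * d (NormedSpace.exp l) = F 1 := by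
      simp [hFdef, one_smul]
    rw [hgoal, st13_main T F (d l) hF hF0, st13_integral T (d l)]
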